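/- arXiv:1512.00734 — 4 statements merged into one kernel-verified Lean document; each statement's English description precedes it below -/
import Mathlib

section
/- If γ : [0, L] → ℝ² is a closed C¹ curve parametrized by arc length (so ‖γ'(s)‖ = 1 for all s and γ(0) = γ(L)), then the enclosed signed area Q = (1/2)∫₀^L (γ₁ γ₂' − γ₂ γ₁') ds satisfies L² ≥ 4πQ. -/
open Real Set MeasureTheory intervalIntegral AddCircle Complex

section aux
variable {L : ℝ} [hL : Fact (0 < L)]

lemma liftIoc_eq' (f : ℝ → ℂ) (x : AddCircle L) :
    liftIoc L 0 f x = f ((equivIoc L 0 x : ℝ)) := rfl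

lemma liftIoc_mem' (x : AddCircle L) : ((equivIoc L 0 x : ℝ)) ∈ Icc 0 L := by
  have h := (equivIoc L 0 x).2
  exact ⟨le_of_lt h.1, by have := h.2; linarith⟩

lemma norm_liftIoc_le' (f : ℝ → ℂ) (C : ℝ) (hC : ∀ s ∈ Icc 0 L, ‖f s‖ ≤ C) (x : AddCircle L) :
    ‖liftIoc L 0 f x‖ ≤ C := by
  rw [liftIoc_eq']; exact hC _ (liftIoc_mem' x)

lemma coeff_lift' (hL' : (0:ℝ) < L) (f : ℝ → ℂ) (n : ℤ) :
    fourierCoeff (liftIoc L 0 f) n = fourierCoeffOn hL' f n := by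
  rw [fourierCoeff_liftIoc_eq (T := L) (a := 0) f n]
  congr 1
  simp

lemma integral_circle_eq' (f : AddCircle L → ℂ) :
    (∫ b, f b ∂haarAddCircle) = (1/L) • ∫ x in (0:ℝ)..L, f (x : AddCircle L) := by
  have h := AddCircle.intervalIntegral_preimage L 0 f
  rw [volume_eq_smul_haarAddCircle, MeasureTheory.integral_smul_measure, zero_add,
    ENNReal.toReal_ofReal hL.out.le] at h
  rw [h, smul_smul, one_div, inv_mul_cancel₀ hL.out.ne', one_smul]

lemma memLp_liftIoc' (f : ℝ → ℂ) (hf : ContinuousOn f (Icc 0 L)) (C : ℝ)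
    (hC : ∀ s ∈ Icc 0 L, ‖f s‖ ≤ C) :
    MemLp (liftIoc L 0 f) 2 (haarAddCircle (T := L)) := by
  have h1 : ContinuousOn f (Ioc (0:ℝ) (0 + L)) := by
    rw [zero_add]; exact hf.mono Ioc_subset_Icc_self
  have hm : Measurable (liftIoc L 0 f) :=
    (continuousOn_iff_continuous_restrict.mp h1).measurable.comp
      (measurableEquivIoc L 0).measurable
  exact MemLp.of_bound hm.aestronglyMeasurable C
    (Filter.Eventually.of_forall (norm_liftIoc_le' f C hC))

lemma fourierCoeff_congr_ae' {f g : AddCircle L → ℂ}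
    (h : f =ᵐ[haarAddCircle] g) (n : ℤ) : fourierCoeff f n = fourierCoeff g n := by
  unfold fourierCoeff
  refine integral_congr_ae ?_
  filter_upwards [h] with x hx
  rw [hx]

omit hL in
lemma coeffOn_deriv' (hL' : (0:ℝ) < L) {g g' : ℝ → ℂ}
    (hg : ∀ s ∈ Icc 0 L, HasDerivAt g (g' s) s)
    (hper : g 0 = g L)
    (hint : IntervalIntegrable g' volume 0 L)
    {n : ℤ} (hn : n ≠ 0) :
    fourierCoeffOn hL' g' n = (2 * π * I * n / L) * fourierCoeffOn hL' g n := by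
  have h := fourierCoeffOn_of_hasDerivAt hL' hn
    (fun x hx => hg x (by rwa [uIcc_of_le hL'.le] at hx)) hint
  rw [← hper, sub_self, mul_zero, zero_sub] at h; push_cast at h
  have h2pn : (2 * ↑π * I * (n:ℂ)) ≠ 0 := by
    simp [Real.pi_ne_zero, Complex.I_ne_zero, hn]
  have hLne : (L:ℂ) ≠ 0 := Complex.ofReal_ne_zero.mpr hL'.ne'
  field_simp at h
  rw [div_mul_eq_mul_div, eq_div_iff hLne]
  linear_combination -h

end aux

theorem schwarz_IIa (L : ℝ) (hL : 0 < L) (y z y' z' : ℝ → ℝ)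
    (hy : ∀ s ∈ Set.Icc 0 L, HasDerivAt y (y' s) s)
    (hz : ∀ s ∈ Set.Icc 0 L, HasDerivAt z (z' s) s)
    (hy' : ContinuousOn y' (Set.Icc 0 L))
    (hz' : ContinuousOn z' (Set.Icc 0 L))
    (hunit : ∀ s ∈ Set.Icc 0 L, y' s ^ 2 + z' s ^ 2 = 1)
    (hcy : y 0 = y L) (hcz : z 0 = z L)
    (Q : ℝ)
    (hQ : Q = (1/2) * ∫ s in (0:ℝ)..L, (y s * z' s - z s * y' s)) :
    L ^ 2 ≥ 4 * Real.pi * Q := by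
  haveI : Fact (0 < L) := ⟨hL⟩
  set g : ℝ → ℂ := fun s => (y s : ℂ) + (z s : ℂ) * I with hgdef
  set gd : ℝ → ℂ := fun s => (y' s : ℂ) + (z' s : ℂ) * I with hgddef
  have hg : ∀ s ∈ Icc 0 L, HasDerivAt g (gd s) s := by
    intro s hs
    exact ((hy s hs).ofReal_comp).add (((hz s hs).ofReal_comp).mul_const I)
  have hgdcont : ContinuousOn gd (Icc 0 L) :=
    ((continuous_ofReal.comp_continuousOn hy').add
      ((continuous_ofReal.comp_continuousOn hz').mul continuousOn_const))
  have hgcont : ContinuousOn g (Icc 0 L) := fun s hs =>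
    (hg s hs).continuousAt.continuousWithinAt
  have hgdint : IntervalIntegrable gd volume 0 L :=
    (hgdcont.mono (by rw [uIcc_of_le hL.le])).intervalIntegrable
  have hper : g 0 = g L := by rw [hgdef]; simp [hcy, hcz]
  have hnorm : ∀ s ∈ Icc 0 L, ‖gd s‖ = 1 := by
    intro s hs
    have h2 : ‖gd s‖ ^ 2 = 1 := by
      show ‖(y' s : ℂ) + (z' s : ℂ) * I‖ ^ 2 = 1
      rw [Complex.sq_norm, Complex.normSq_add_mul_I]
      exact hunit s hs
    nlinarith [norm_nonneg (gd s)]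
  -- Lp elements
  obtain ⟨Cg, hCg⟩ : ∃ C, ∀ s ∈ Icc 0 L, ‖g s‖ ≤ C := by
    obtain ⟨C, hC⟩ := (isCompact_Icc.image_of_continuousOn hgcont).isBounded.exists_norm_le
    exact ⟨C, fun s hs => hC _ (Set.mem_image_of_mem g hs)⟩
  have memG : MemLp (liftIoc L 0 g) 2 (haarAddCircle (T := L)) :=
    memLp_liftIoc' g hgcont Cg hCg
  have memGd : MemLp (liftIoc L 0 gd) 2 (haarAddCircle (T := L)) :=
    memLp_liftIoc' gd hgdcont 1 (fun s hs => (hnorm s hs).le)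
  set Gl : Lp ℂ 2 (haarAddCircle (T := L)) := memG.toLp _ with hGl
  set F : Lp ℂ 2 (haarAddCircle (T := L)) := memGd.toLp _ with hF
  set c : ℤ → ℂ := fun n => fourierCoeffOn hL g n with hc
  set d : ℤ → ℂ := fun n => fourierCoeffOn hL gd n with hd
  have hcGl : ∀ n, fourierCoeff (Gl : AddCircle L → ℂ) n = c n := fun n =>
    (fourierCoeff_congr_ae' memG.coeFn_toLp n).trans (coeff_lift' hL g n)
  have hcF : ∀ n, fourierCoeff (F : AddCircle L → ℂ) n = d n := fun n =>
    (fourierCoeff_congr_ae' memGd.coeFn_toLp n).trans (coeff_lift' hL gd n)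
  -- d 0 = 0
  have hd0 : d 0 = 0 := by
    show fourierCoeffOn hL gd 0 = (0:ℂ)
    rw [fourierCoeffOn_eq_integral, neg_zero]
    simp only [fourier_zero, one_smul, sub_zero]
    rw [intervalIntegral.integral_eq_sub_of_hasDerivAt
      (fun x hx => hg x (by rwa [uIcc_of_le hL.le] at hx)) hgdint, ← hper, sub_self, smul_zero]
  have hdn : ∀ n : ℤ, n ≠ 0 → d n = (2 * π * I * n / L) * c n := fun n hn =>
    coeffOn_deriv' hL hg hper hgdint hn
  -- Hilbert basis expansion of the inner product
  have hB : ∀ i : ℤ, (@inner ℂ _ _ ((fourierBasis (T := L)) i) F) = d i := by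
    intro i
    rw [← fourierBasis.repr_apply_apply F i, fourierBasis_repr, hcF]
  have hA : ∀ i : ℤ, (@inner ℂ _ _ Gl ((fourierBasis (T := L)) i)) = (starRingEnd ℂ) (c i) := by
    intro i
    rw [← inner_conj_symm, ← fourierBasis.repr_apply_apply Gl i, fourierBasis_repr, hcGl]
  have key1 : HasSum (fun n => (starRingEnd ℂ) (c n) * d n) (@inner ℂ _ _ Gl F) := by
    have h := fourierBasis.hasSum_inner_mul_inner Gl F
    simp only [hA, hB] at h
    exact h
  -- inner product as an interval integral
  have key2 : (@inner ℂ _ _ Gl F) = (1/L) • ∫ x in (0:ℝ)..L, (starRingEnd ℂ) (g x) * gd x := by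
    rw [MeasureTheory.L2.inner_def]
    have hae : ∫ a, @inner ℂ _ _ (Gl a) (F a) ∂(haarAddCircle (T := L))
        = ∫ a, (starRingEnd ℂ) (liftIoc L 0 g a) * liftIoc L 0 gd a ∂haarAddCircle := by
      refine integral_congr_ae ?_
      filter_upwards [memG.coeFn_toLp, memGd.coeFn_toLp] with a h1 h2
      rw [RCLike.inner_apply, h1, h2, mul_comm]
    rw [hae, integral_circle_eq']
    congr 1
    rw [intervalIntegral.integral_of_le hL.le, intervalIntegral.integral_of_le hL.le]
    refine setIntegral_congr_fun measurableSet_Ioc fun x hx => ?_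
    have hx' : x ∈ Ioc (0:ℝ) (0 + L) := by rwa [zero_add]
    rw [liftIoc_coe_apply hx', liftIoc_coe_apply hx']
  -- imaginary part of the integral
  have hycont : ContinuousOn y (Icc 0 L) := fun s hs => (hy s hs).continuousAt.continuousWithinAt
  have hzcont : ContinuousOn z (Icc 0 L) := fun s hs => (hz s hs).continuousAt.continuousWithinAt
  have key3 : (∫ x in (0:ℝ)..L, (starRingEnd ℂ) (g x) * gd x).im = 2 * Q := by
    have hpt : ∀ x : ℝ, (starRingEnd ℂ) (g x) * gd x
        = ((y x * y' x + z x * z' x : ℝ) : ℂ) + ((y x * z' x - z x * y' x : ℝ) : ℂ) * I := by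
      intro x
      show (starRingEnd ℂ) ((y x : ℂ) + (z x : ℂ) * I) * ((y' x : ℂ) + (z' x : ℂ) * I) = _
      simp only [map_add, map_mul, Complex.conj_ofReal, Complex.conj_I]
      push_cast
      linear_combination (-(z x : ℂ) * (z' x : ℂ)) * Complex.I_sq
    have hint1 : IntervalIntegrable (fun x => ((y x * y' x + z x * z' x : ℝ) : ℂ)) volume 0 L := by
      apply ContinuousOn.intervalIntegrable
      rw [uIcc_of_le hL.le]
      exact continuous_ofReal.comp_continuousOn ((hycont.mul hy').add (hzcont.mul hz'))
    have hint2 : IntervalIntegrable (fun x => ((y x * z' x - z x * y' x : ℝ) : ℂ) * I) volume 0 L := by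
      apply ContinuousOn.intervalIntegrable
      rw [uIcc_of_le hL.le]
      exact (continuous_ofReal.comp_continuousOn ((hycont.mul hz').sub (hzcont.mul hy'))).mul
        continuousOn_const
    rw [show (fun x => (starRingEnd ℂ) (g x) * gd x)
        = fun x => ((y x * y' x + z x * z' x : ℝ) : ℂ)
          + ((y x * z' x - z x * y' x : ℝ) : ℂ) * I from funext hpt]
    rw [intervalIntegral.integral_add hint1 hint2, intervalIntegral.integral_mul_const,
      intervalIntegral.integral_ofReal, intervalIntegral.integral_ofReal]
    simp only [Complex.add_im, Complex.ofReal_im, Complex.mul_im, Complex.I_im, Complex.I_re,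
      Complex.ofReal_re, mul_one, mul_zero, add_zero, zero_add]
    rw [hQ]; ring
  -- Parseval
  have hsummable : Summable (fun n : ℤ => ‖d n‖^2) := by
    have h := (orthonormal_fourier (T := L)).inner_products_summable F
    have he : (fun i : ℤ => ‖@inner ℂ _ _ (fourierLp 2 i) F‖^2) = fun n => ‖d n‖^2 := by
      funext i
      rw [show (fourierLp 2 i : Lp ℂ 2 (haarAddCircle (T := L))) = fourierBasis i by
          rw [coe_fourierBasis],
        ← fourierBasis.repr_apply_apply F i, fourierBasis_repr, hcF]
    rwa [he] at h
  have hpars : HasSum (fun n : ℤ => ‖d n‖^2) 1 := by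
    rw [hsummable.hasSum_iff]
    have ht := tsum_sq_fourierCoeff F
    simp only [hcF] at ht
    rw [ht]
    have : ∫ t : AddCircle L, ‖(F : AddCircle L → ℂ) t‖^2 ∂haarAddCircle
        = ∫ _t : AddCircle L, (1:ℝ) ∂haarAddCircle := by
      refine integral_congr_ae ?_
      filter_upwards [memGd.coeFn_toLp] with t ht'
      rw [ht', liftIoc_eq', hnorm _ (liftIoc_mem' t), one_pow]
    rw [this]
    simp
  -- take imaginary parts
  have him : HasSum (fun n => ((starRingEnd ℂ) (c n) * d n).im) (2*Q/L) := by
    have h := key1.mapL Complex.imCLM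
    have hval : Complex.imCLM (@inner ℂ _ _ Gl F) = 2*Q/L := by
      rw [Complex.imCLM_apply, key2]
      simp only [Complex.real_smul, Complex.mul_im, Complex.ofReal_re, Complex.ofReal_im,
        zero_mul, add_zero]
      rw [key3]
      ring
    rw [hval] at h
    exact h
  have hterm : ∀ n : ℤ, ((starRingEnd ℂ) (c n) * d n).im = (2*π*n/L) * ‖c n‖^2 := by
    intro n
    rcases eq_or_ne n 0 with rfl | hn
    · simp [hd0]
    · rw [hdn n hn]
      have hcc : (starRingEnd ℂ) (c n) * ((2*π*I*n/L) * c n)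
          = ((2*π*n/L * ‖c n‖^2 : ℝ) : ℂ) * I := by
        have h1 : (c n) * (starRingEnd ℂ) (c n) = ((‖c n‖^2 : ℝ) : ℂ) := by
          rw [Complex.mul_conj, Complex.sq_norm]
        push_cast
        push_cast at h1
        linear_combination (2*↑π*I*↑n/↑L) * h1
      rw [hcc, Complex.mul_I_im, Complex.ofReal_re]
  have h1 : HasSum (fun n : ℤ => (2*π*n/L) * ‖c n‖^2) (2*Q/L) := by
    rwa [show (fun n : ℤ => (2*π*n/L) * ‖c n‖^2)
      = fun n => ((starRingEnd ℂ) (c n) * d n).im from (funext hterm).symm]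
  have hterm2 : ∀ n : ℤ, ‖d n‖^2 = (2*π*n/L)^2 * ‖c n‖^2 := by
    intro n
    rcases eq_or_ne n 0 with rfl | hn
    · simp [hd0]
    · rw [hdn n hn, norm_mul, mul_pow]
      congr 1
      have habs : ‖(2*(π:ℂ)*I*(n:ℂ)/(L:ℂ) : ℂ)‖^2 = (2*π*(n:ℝ)/L)^2 := by
        simp only [norm_div, norm_mul, Complex.norm_I, Real.norm_eq_abs,
          Complex.norm_real, Complex.norm_intCast, Complex.norm_two, mul_one]
        rw [abs_of_pos Real.pi_pos, abs_of_pos hL, div_pow, mul_pow, _root_.sq_abs]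
        ring
      exact habs
  have h2 : HasSum (fun n : ℤ => (2*π*n/L)^2 * ‖c n‖^2) 1 := by
    rwa [show (fun n : ℤ => (2*π*n/L)^2 * ‖c n‖^2) = fun n => ‖d n‖^2 from (funext hterm2).symm]
  -- conclusion
  have h1' : HasSum (fun n : ℤ => (2*π*L) * ((2*π*n/L) * ‖c n‖^2)) ((2*π*L) * (2*Q/L)) :=
    h1.mul_left _
  have h2' : HasSum (fun n : ℤ => (L^2) * ((2*π*n/L)^2 * ‖c n‖^2)) (L^2 * 1) :=
    h2.mul_left _
  have hle : (2*π*L) * (2*Q/L) ≤ L^2 * 1 := by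
    refine hasSum_le (fun n => ?_) h1' h2'
    have hn2 : (n:ℝ) ≤ (n:ℝ)^2 := by exact_mod_cast Int.le_self_sq n
    have hx : (0:ℝ) ≤ ‖c n‖^2 := sq_nonneg _
    have eL : (2*π*L) * ((2*π*(n:ℝ)/L) * ‖c n‖^2) = 4*π^2*(n:ℝ)*‖c n‖^2 := by
      field_simp
      ring
    have eR : (L^2) * ((2*π*(n:ℝ)/L)^2 * ‖c n‖^2) = 4*π^2*(n:ℝ)^2*‖c n‖^2 := by
      rw [div_pow]
      field_simp
      ring
    rw [eL, eR]
    have : 0 ≤ 4*π^2*‖c n‖^2 * ((n:ℝ)^2 - (n:ℝ)) :=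
      mul_nonneg (by positivity) (sub_nonneg.2 hn2)
    nlinarith
  have heq : (2*π*L) * (2*Q/L) = 4*π*Q := by
    field_simp
    ring
  rw [heq] at hle
  linarith
end

section
/- The function f(φ) = (φ − sin φ cos φ)/(2 sin² φ) is strictly increasing on (−π, 0) and on (0, π), with derivative f'(φ) = (tan φ − φ)/(tan φ · sin² φ), which is positive for all φ in (0, π) with φ ≠ π/2. -/
open Real Set

lemma key_deriv (φ : ℝ) (hs : Real.sin φ ≠ 0) :
    HasDerivAt (fun φ : ℝ => (φ - Real.sin φ * Real.cos φ) / (2 * Real.sin φ ^ 2))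
      ((Real.sin φ - φ * Real.cos φ) / Real.sin φ ^ 3) φ := by
  have hu : HasDerivAt (fun φ : ℝ => φ - Real.sin φ * Real.cos φ)
      (1 - (Real.cos φ * Real.cos φ + Real.sin φ * (-Real.sin φ))) φ :=
    (hasDerivAt_id φ).sub ((Real.hasDerivAt_sin φ).mul (Real.hasDerivAt_cos φ))
  have hv : HasDerivAt (fun φ : ℝ => 2 * Real.sin φ ^ 2)
      (2 * (2 * Real.sin φ ^ 1 * Real.cos φ)) φ :=
    ((Real.hasDerivAt_sin φ).pow 2).const_mul 2
  have hv0 : 2 * Real.sin φ ^ 2 ≠ 0 := by positivity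
  have := hu.div hv hv0
  refine this.congr_deriv ?_
  have h1 := Real.sin_sq_add_cos_sq φ
  rw [div_eq_div_iff (by positivity) (by positivity)]
  linear_combination (2 * Real.sin φ ^ 5) * h1

lemma key_pos (φ : ℝ) (h0 : 0 < φ) (hπ : φ < Real.pi) :
    0 < (Real.sin φ - φ * Real.cos φ) / Real.sin φ ^ 3 := by
  have hs : 0 < Real.sin φ := Real.sin_pos_of_pos_of_lt_pi h0 hπ
  apply div_pos _ (by positivity)
  rcases lt_or_ge φ (Real.pi / 2) with h | h
  · have hc : 0 < Real.cos φ := Real.cos_pos_of_mem_Ioo ⟨by linarith [Real.pi_pos], h⟩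
    have ht : φ < Real.tan φ := Real.lt_tan h0 h
    rw [Real.tan_eq_sin_div_cos, lt_div_iff₀ hc] at ht
    nlinarith
  · have hc : Real.cos φ ≤ 0 := Real.cos_nonpos_of_pi_div_two_le_of_le h (by linarith [Real.pi_pos])
    nlinarith

lemma key_pos' (φ : ℝ) (h0 : -Real.pi < φ) (hπ : φ < 0) :
    0 < (Real.sin φ - φ * Real.cos φ) / Real.sin φ ^ 3 := by
  have h := key_pos (-φ) (by linarith) (by linarith)
  simp only [Real.sin_neg, Real.cos_neg, neg_mul, sub_neg_eq_add] at h
  have heq : (-Real.sin φ + φ * Real.cos φ) / (-Real.sin φ) ^ 3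
      = (Real.sin φ - φ * Real.cos φ) / Real.sin φ ^ 3 := by
    rw [show (-Real.sin φ) ^ 3 = -(Real.sin φ ^ 3) by ring,
        show -Real.sin φ + φ * Real.cos φ = -(Real.sin φ - φ * Real.cos φ) by ring,
        neg_div_neg_eq]
  rw [heq] at h
  exact h

theorem schwarz_f_strictMono :
    StrictMonoOn (fun φ : ℝ => (φ - Real.sin φ * Real.cos φ) / (2 * Real.sin φ ^ 2))
      (Set.Ioo (-Real.pi) 0) ∧
    StrictMonoOn (fun φ : ℝ => (φ - Real.sin φ * Real.cos φ) / (2 * Real.sin φ ^ 2))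
      (Set.Ioo 0 Real.pi) ∧
    (∀ φ ∈ Set.Ioo (0:ℝ) Real.pi, φ ≠ Real.pi / 2 →
      HasDerivAt (fun φ : ℝ => (φ - Real.sin φ * Real.cos φ) / (2 * Real.sin φ ^ 2))
        ((Real.tan φ - φ) / (Real.tan φ * Real.sin φ ^ 2)) φ ∧
      0 < (Real.tan φ - φ) / (Real.tan φ * Real.sin φ ^ 2)) := by
  refine ⟨?_, ?_, ?_⟩
  · apply strictMonoOn_of_deriv_pos (convex_Ioo _ _)
    · intro x hx
      have hs : Real.sin x ≠ 0 := (Real.sin_neg_of_neg_of_neg_pi_lt hx.2 hx.1).ne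
      exact (key_deriv x hs).continuousAt.continuousWithinAt
    · intro x hx
      rw [interior_Ioo] at hx
      have hs : Real.sin x ≠ 0 := (Real.sin_neg_of_neg_of_neg_pi_lt hx.2 hx.1).ne
      rw [(key_deriv x hs).deriv]
      exact key_pos' x hx.1 hx.2
  · apply strictMonoOn_of_deriv_pos (convex_Ioo _ _)
    · intro x hx
      have hs : Real.sin x ≠ 0 := (Real.sin_pos_of_pos_of_lt_pi hx.1 hx.2).ne'
      exact (key_deriv x hs).continuousAt.continuousWithinAt
    · intro x hx
      rw [interior_Ioo] at hx
      have hs : Real.sin x ≠ 0 := (Real.sin_pos_of_pos_of_lt_pi hx.1 hx.2).ne'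
      rw [(key_deriv x hs).deriv]
      exact key_pos x hx.1 hx.2
  · intro φ hφ hne
    have hs : 0 < Real.sin φ := Real.sin_pos_of_pos_of_lt_pi hφ.1 hφ.2
    have hc : Real.cos φ ≠ 0 := by
      intro hc0
      obtain ⟨k, hk⟩ := Real.cos_eq_zero_iff.mp hc0
      have hπ := Real.pi_pos
      have hk1 : (k:ℝ) < 1 := by nlinarith [hφ.2, hk]
      have hk2 : (-1:ℝ) < (k:ℝ) := by nlinarith [hφ.1, hk]
      have : k = 0 := by
        have a : k < 1 := by exact_mod_cast hk1
        have b : -1 < k := by exact_mod_cast hk2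
        omega
      rw [this] at hk
      exact hne (by rw [hk]; push_cast; ring)
    have heq : (Real.tan φ - φ) / (Real.tan φ * Real.sin φ ^ 2)
        = (Real.sin φ - φ * Real.cos φ) / Real.sin φ ^ 3 := by
      rw [Real.tan_eq_sin_div_cos]
      field_simp
    rw [heq]
    exact ⟨key_deriv φ hs.ne', key_pos φ hφ.1 hφ.2⟩
end

section
/- The function f(φ) = (φ − sin φ cos φ)/(2 sin² φ) maps the interval (0, π) bijectively and continuously onto (0, ∞); more precisely f(φ) → 0 as φ → 0⁺ and f(φ) → ∞ as φ → π⁻, and f is strictly monotone, so for every c > 0 the equation f(φ) = c has a unique solution φ ∈ (0, π). -/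
open Real Set Filter

noncomputable def F (φ : ℝ) : ℝ := (φ - Real.sin φ * Real.cos φ) / (2 * Real.sin φ ^ 2)

lemma key_ineq {x : ℝ} (hx : x ∈ Set.Ioo 0 Real.pi) : x * Real.cos x < Real.sin x := by
  obtain ⟨h0, hπ⟩ := hx
  have hs : 0 < Real.sin x := Real.sin_pos_of_pos_of_lt_pi h0 hπ
  rcases lt_or_ge x (Real.pi / 2) with h | h
  · have hc : 0 < Real.cos x := Real.cos_pos_of_mem_Ioo ⟨by linarith [Real.pi_pos], h⟩
    have := Real.lt_tan h0 h
    rw [Real.tan_eq_sin_div_cos] at this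
    calc x * Real.cos x < (Real.sin x / Real.cos x) * Real.cos x := by
          exact mul_lt_mul_of_pos_right this hc
      _ = Real.sin x := by field_simp
  · have hc : Real.cos x ≤ 0 := Real.cos_nonpos_of_pi_div_two_le_of_le h (by linarith [Real.pi_pos])
    nlinarith

lemma F_hasDerivAt {x : ℝ} (hx : x ∈ Set.Ioo 0 Real.pi) :
    HasDerivAt F ((Real.sin x - x * Real.cos x) / Real.sin x ^ 3) x := by
  have hs : 0 < Real.sin x := Real.sin_pos_of_pos_of_lt_pi hx.1 hx.2
  have hs' : Real.sin x ≠ 0 := ne_of_gt hs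
  have hg : HasDerivAt (fun φ : ℝ => φ - Real.sin φ * Real.cos φ)
      (1 - (Real.cos x * Real.cos x + Real.sin x * (-Real.sin x))) x :=
    (hasDerivAt_id x).sub ((Real.hasDerivAt_sin x).mul (Real.hasDerivAt_cos x))
  have hh : HasDerivAt (fun φ : ℝ => 2 * Real.sin φ ^ 2)
      (2 * (2 * Real.sin x ^ 1 * Real.cos x)) x :=
    (((Real.hasDerivAt_sin x).pow 2)).const_mul 2
  have hne : 2 * Real.sin x ^ 2 ≠ 0 := by positivity
  have := hg.div hh hne
  refine this.congr_deriv ?_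
  have h1 : Real.sin x ^ 2 = 1 - Real.cos x ^ 2 := by
    have := Real.sin_sq_add_cos_sq x; ring_nf; nlinarith [Real.sin_sq_add_cos_sq x]
  rw [div_eq_div_iff (by positivity) (by positivity)]
  linear_combination (2 * Real.sin x ^ 5) * Real.sin_sq_add_cos_sq x

lemma F_contOn : ContinuousOn F (Set.Ioo 0 Real.pi) := by
  apply ContinuousOn.div
  · fun_prop
  · fun_prop
  · intro x hx
    have hs : 0 < Real.sin x := Real.sin_pos_of_pos_of_lt_pi hx.1 hx.2
    positivity

lemma F_mono : StrictMonoOn F (Set.Ioo 0 Real.pi) := by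
  apply StrictMonoOn.mono (s := Set.Ioo 0 Real.pi) ?_ le_rfl
  apply strictMonoOn_of_deriv_pos (convex_Ioo _ _) F_contOn
  intro x hx
  rw [interior_Ioo] at hx
  rw [(F_hasDerivAt hx).deriv]
  have hs : 0 < Real.sin x := Real.sin_pos_of_pos_of_lt_pi hx.1 hx.2
  have := key_ineq hx
  apply div_pos (by linarith) (by positivity)

lemma F_pos {x : ℝ} (hx : x ∈ Set.Ioo 0 Real.pi) : 0 < F x := by
  have hs : 0 < Real.sin x := Real.sin_pos_of_pos_of_lt_pi hx.1 hx.2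
  have h1 : Real.sin x < x := Real.sin_lt hx.1
  have h2 : Real.sin x * Real.cos x ≤ Real.sin x := by
    nlinarith [Real.cos_le_one x]
  exact div_pos (by linarith) (by positivity)

lemma F_le {x : ℝ} (h0 : 0 < x) (h1 : x ≤ 1/2) : F x ≤ x := by
  have hπ : x < Real.pi := by nlinarith [Real.pi_gt_three]
  have hs : 0 < Real.sin x := Real.sin_pos_of_pos_of_lt_pi h0 hπ
  have hsin2 : 2*x - (2*x)^3/4 < Real.sin (2*x) := by
    have h := Real.sin_gt_sub_cube (x := 2*x) (by linarith); have : 0 < (2*x)^3 := by positivity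
    linarith
  have hnum : x - Real.sin x * Real.cos x < x^3 := by
    have : Real.sin (2*x) = 2 * Real.sin x * Real.cos x := Real.sin_two_mul x
    nlinarith
  have hsinlb : x - x^3/4 < Real.sin x := by
    have h := Real.sin_gt_sub_cube h0; have : 0 < x^3 := by positivity
    linarith
  have hxlb : 15/16 * x ≤ x - x^3/4 := by nlinarith [mul_le_mul_of_nonneg_left (by nlinarith : x^2 ≤ (1:ℝ)/4) h0.le]
  have hden : 225/128 * x^2 < 2 * Real.sin x ^ 2 := by nlinarith
  have hdpos : (0:ℝ) < 225/128 * x^2 := by positivity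
  calc F x ≤ x^3 / (225/128 * x^2) :=
        div_le_div₀ (by positivity) hnum.le hdpos hden.le
    _ = 128/225 * x := by field_simp
    _ ≤ x := by linarith

lemma F_lim0 : Tendsto F (nhdsWithin 0 (Set.Ioi 0)) (nhds 0) := by
  refine squeeze_zero' (g := fun x : ℝ => x) ?_ ?_ ?_
  · filter_upwards [Ioo_mem_nhdsGT_of_mem (⟨le_rfl, Real.pi_pos⟩ : (0:ℝ) ∈ Set.Ico 0 Real.pi)] with x hx
    exact le_of_lt (F_pos hx)
  · filter_upwards [Ioo_mem_nhdsGT_of_mem (⟨le_rfl, by norm_num⟩ : (0:ℝ) ∈ Set.Ico 0 (1/2:ℝ))] with x hx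
    exact F_le hx.1 (le_of_lt hx.2)
  · exact Filter.Tendsto.mono_left tendsto_id nhdsWithin_le_nhds

lemma F_limpi : Tendsto F (nhdsWithin Real.pi (Set.Iio Real.pi)) atTop := by
  have hnum : Tendsto (fun φ : ℝ => φ - Real.sin φ * Real.cos φ)
      (nhdsWithin Real.pi (Set.Iio Real.pi)) (nhds Real.pi) := by
    have h := ((continuous_id.sub (Real.continuous_sin.mul Real.continuous_cos)).tendsto Real.pi).mono_left (nhdsWithin_le_nhds (s := Set.Iio Real.pi))
    convert h using 2 <;> simp [Pi.sub_apply, Pi.mul_apply]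
  have hden : Tendsto (fun φ : ℝ => 2 * Real.sin φ ^ 2)
      (nhdsWithin Real.pi (Set.Iio Real.pi)) (nhdsWithin 0 (Set.Ioi 0)) := by
    apply tendsto_nhdsWithin_of_tendsto_nhds_of_eventually_within
    · have h := ((continuous_const (y := (2:ℝ))).mul (Real.continuous_sin.pow 2)).tendsto Real.pi
      convert h.mono_left (nhdsWithin_le_nhds (s := Set.Iio Real.pi)) using 2 <;> simp [Pi.mul_apply, Pi.pow_apply]
    · filter_upwards [Ioo_mem_nhdsLT_of_mem (⟨Real.pi_pos, le_rfl⟩ : Real.pi ∈ Set.Ioc 0 Real.pi)] with x hx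
      have hs : 0 < Real.sin x := Real.sin_pos_of_pos_of_lt_pi hx.1 hx.2
      show (0:ℝ) < 2 * Real.sin x ^ 2
      positivity
  have hinv : Tendsto (fun φ : ℝ => (2 * Real.sin φ ^ 2)⁻¹)
      (nhdsWithin Real.pi (Set.Iio Real.pi)) atTop := hden.inv_tendsto_nhdsGT_zero
  exact (Filter.Tendsto.pos_mul_atTop Real.pi_pos hnum hinv).congr (fun x => (div_eq_mul_inv _ _).symm)

theorem schwarz_f_bijective :
    StrictMonoOn (fun φ : ℝ => (φ - Real.sin φ * Real.cos φ) / (2 * Real.sin φ ^ 2))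
      (Set.Ioo 0 Real.pi) ∧
    ContinuousOn (fun φ : ℝ => (φ - Real.sin φ * Real.cos φ) / (2 * Real.sin φ ^ 2))
      (Set.Ioo 0 Real.pi) ∧
    Tendsto (fun φ : ℝ => (φ - Real.sin φ * Real.cos φ) / (2 * Real.sin φ ^ 2))
      (nhdsWithin 0 (Set.Ioi 0)) (nhds 0) ∧
    Tendsto (fun φ : ℝ => (φ - Real.sin φ * Real.cos φ) / (2 * Real.sin φ ^ 2))
      (nhdsWithin Real.pi (Set.Iio Real.pi)) atTop ∧
    ∀ c : ℝ, 0 < c → ∃! φ : ℝ, φ ∈ Set.Ioo (0:ℝ) Real.pi ∧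
      (φ - Real.sin φ * Real.cos φ) / (2 * Real.sin φ ^ 2) = c := by
  refine ⟨F_mono, F_contOn, F_lim0, F_limpi, ?_⟩
  intro c hc
  have h1 : ∀ᶠ x in nhdsWithin (0:ℝ) (Set.Ioi 0), F x < c := F_lim0.eventually_lt_const hc
  have h2 : ∀ᶠ x in nhdsWithin (0:ℝ) (Set.Ioi 0), x ∈ Set.Ioo 0 Real.pi :=
    Ioo_mem_nhdsGT_of_mem ⟨le_rfl, Real.pi_pos⟩
  obtain ⟨a, ha1, ha2⟩ := (h1.and h2).exists
  have h3 : ∀ᶠ x in nhdsWithin Real.pi (Set.Iio Real.pi), c < F x := F_limpi.eventually_gt_atTop c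
  have h4 : ∀ᶠ x in nhdsWithin Real.pi (Set.Iio Real.pi), x ∈ Set.Ioo 0 Real.pi :=
    Ioo_mem_nhdsLT_of_mem ⟨Real.pi_pos, le_rfl⟩
  obtain ⟨b, hb1, hb2⟩ := (h3.and h4).exists
  have hab : a < b := by
    by_contra h
    push_neg at h
    rcases eq_or_lt_of_le h with h | h
    · subst h; linarith
    · have := F_mono hb2 ha2 h; linarith
  have hsub : Set.Icc a b ⊆ Set.Ioo 0 Real.pi := Set.Icc_subset_Ioo ha2.1 hb2.2
  have hcont : ContinuousOn F (Set.Icc a b) := F_contOn.mono hsub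
  have hmem : c ∈ Set.Icc (F a) (F b) := ⟨ha1.le, hb1.le⟩
  obtain ⟨φ, hφmem, hFφ⟩ := intermediate_value_Icc hab.le hcont hmem
  refine ⟨φ, ⟨hsub hφmem, hFφ⟩, ?_⟩
  rintro y ⟨hy, hFy⟩
  exact F_mono.injOn hy (hsub hφmem) (show F y = F φ from hFy.trans hFφ.symm)
end

section
/- Let Q : [x₀, x₁] → ℝ be C¹, nonnegative, with Q(x₀) = Q(x₁) = 0, and let V = ∫_{x₀}^{x₁} Q(x) dx > 0. Then ∫_{x₀}^{x₁} √(4πQ(x) + Q'(x)²) dx ≥ (36πV²)^{1/3}, i.e., the surface area of a body of revolution with cross-sectional area function Q is at least that of the ball of the same volume V. -/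
open Real Set intervalIntegral

noncomputable def schwarzG (V : ℝ) : ℝ → ℝ :=
  fun t => 2 * Real.cos (Real.arccos (2*t/V - 1) / 3 - 2*Real.pi/3)

lemma schwarzG_continuous (V : ℝ) : Continuous (schwarzG V) := by
  unfold schwarzG
  apply Continuous.mul continuous_const
  apply Real.continuous_cos.comp
  apply Continuous.sub _ continuous_const
  apply Continuous.div_const
  exact Real.continuous_arccos.comp (by continuity)

lemma abs_schwarzG_le (V t : ℝ) : |schwarzG V t| ≤ 2 := by
  unfold schwarzG
  rw [abs_mul, abs_two]
  calc (2:ℝ) * |Real.cos _| ≤ 2 * 1 :=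
        mul_le_mul_of_nonneg_left (Real.abs_cos_le_one _) (by norm_num)
    _ = 2 := by norm_num

lemma schwarzG_identity (V t : ℝ) (hV : 0 < V) (h0 : 0 ≤ t) (h1 : t ≤ V) :
    schwarzG V t - (schwarzG V t)^3/3 = 2/3 - 4*t/(3*V) := by
  have hy1 : (-1:ℝ) ≤ 2*t/V - 1 := by
    have h : 0 ≤ 2*t/V := by positivity
    linarith
  have hy2 : 2*t/V - 1 ≤ 1 := by
    have h : 2*t/V ≤ 2 := by rw [div_le_iff₀ hV]; linarith
    linarith
  set θ := Real.arccos (2*t/V - 1) / 3 - 2*Real.pi/3 with hθ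
  have h3θ : 3 * θ = Real.arccos (2*t/V - 1) - 2*Real.pi := by rw [hθ]; ring
  have hc : Real.cos (3*θ) = 2*t/V - 1 := by
    rw [h3θ, Real.cos_sub_two_pi, Real.cos_arccos hy1 hy2]
  have hmul := Real.cos_three_mul θ
  have hkey : 4 * Real.cos θ ^ 3 - 3 * Real.cos θ = 2*t/V - 1 := by rw [← hmul, hc]
  have hVne : V ≠ 0 := ne_of_gt hV
  show 2 * Real.cos θ - (2 * Real.cos θ)^3/3 = 2/3 - 4*t/(3*V)
  linear_combination (-(2:ℝ)/3) * hkey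

lemma schwarzG_mem (V t : ℝ) (hV : 0 < V) (h0 : 0 < t) (h1 : t < V) :
    schwarzG V t ∈ Set.Ioo (-1 : ℝ) 1 := by
  have hπ := Real.pi_pos
  have hy1 : (-1:ℝ) < 2*t/V - 1 := by
    have h : 0 < 2*t/V := by positivity
    linarith
  have hy2 : 2*t/V - 1 < 1 := by
    have h : 2*t/V < 2 := by rw [div_lt_iff₀ hV]; linarith
    linarith
  have harc_pos : 0 < Real.arccos (2*t/V-1) := Real.arccos_pos.2 hy2
  have harc_le : Real.arccos (2*t/V-1) ≤ Real.pi := Real.arccos_le_pi _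
  have harc_lt : Real.arccos (2*t/V-1) < Real.pi := by
    rcases lt_or_eq_of_le harc_le with h | h
    · exact h
    · exact absurd (Real.arccos_eq_pi.1 h) (by linarith)
  have hflip : Real.arccos (2*t/V-1)/3 - 2*Real.pi/3
      = -(2*Real.pi/3 - Real.arccos (2*t/V-1)/3) := by ring
  have hw1 : Real.pi/3 < 2*Real.pi/3 - Real.arccos (2*t/V-1)/3 := by linarith
  have hw2 : 2*Real.pi/3 - Real.arccos (2*t/V-1)/3 < 2*Real.pi/3 := by linarith
  have hub : Real.cos (2*Real.pi/3 - Real.arccos (2*t/V-1)/3) < 1/2 := by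
    have h := Real.cos_lt_cos_of_nonneg_of_le_pi
      (by positivity : (0:ℝ) ≤ Real.pi/3) (by linarith) hw1
    rwa [Real.cos_pi_div_three] at h
  have h23 : Real.cos (2*Real.pi/3) = -(1/2) := by
    rw [show (2*Real.pi/3:ℝ) = Real.pi - Real.pi/3 by ring, Real.cos_pi_sub,
      Real.cos_pi_div_three]
  have hlb : -(1/2) < Real.cos (2*Real.pi/3 - Real.arccos (2*t/V-1)/3) := by
    have h := Real.cos_lt_cos_of_nonneg_of_le_pi (by linarith) (by linarith) hw2
    rwa [h23] at h
  unfold schwarzG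
  rw [Set.mem_Ioo, hflip, Real.cos_neg]
  constructor <;> linarith

lemma schwarzG_zero (V : ℝ) : schwarzG V 0 = 1 := by
  unfold schwarzG
  rw [show 2*(0:ℝ)/V - 1 = -1 by simp, Real.arccos_neg_one,
    show (Real.pi/3 - 2*Real.pi/3 : ℝ) = -(Real.pi/3) by ring,
    Real.cos_neg, Real.cos_pi_div_three]
  norm_num

lemma schwarzG_V (V : ℝ) (hV : V ≠ 0) : schwarzG V V = -1 := by
  unfold schwarzG
  rw [show 2*V/V - 1 = 1 by rw [mul_div_assoc, div_self hV]; norm_num,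
    Real.arccos_one, zero_div,
    show (0:ℝ) - 2*Real.pi/3 = -(Real.pi - Real.pi/3) by ring,
    Real.cos_neg, Real.cos_pi_sub, Real.cos_pi_div_three]
  norm_num

lemma schwarzG_hasDerivAt (V t : ℝ) (hV : 0 < V) (h0 : 0 < t) (h1 : t < V) :
    HasDerivAt (schwarzG V) (-(4/(3*V)) / (1 - (schwarzG V t)^2)) t := by
  have hy1 : (-1:ℝ) < 2*t/V - 1 := by
    have h : 0 < 2*t/V := by positivity
    linarith
  have hy2 : 2*t/V - 1 < 1 := by
    have h : 2*t/V < 2 := by rw [div_lt_iff₀ hV]; linarith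
    linarith
  have hyd : HasDerivAt (fun s : ℝ => 2*s/V - 1) (2/V) t := by
    simpa using (((hasDerivAt_id t).const_mul 2).div_const V).sub_const 1
  have harc := (Real.hasDerivAt_arccos (ne_of_gt hy1) (ne_of_lt hy2)).comp t hyd
  have hθd := (harc.div_const 3).sub_const (2*Real.pi/3)
  set D : ℝ := 2 * (-Real.sin (Real.arccos (2*t/V-1)/3 - 2*Real.pi/3) *
      ((-(1/Real.sqrt (1-(2*t/V-1)^2)) * (2/V))/3)) with hD
  have hG : HasDerivAt (schwarzG V) D t := by
    have h := ((Real.hasDerivAt_cos (Real.arccos (2*t/V-1)/3 - 2*Real.pi/3)).comp t hθd).const_mul 2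
    exact h
  set u := schwarzG V t with hu
  have humem := schwarzG_mem V t hV h0 h1
  have hu2 : (1:ℝ) - u^2 ≠ 0 := by
    have h1' := humem.1
    have h2' := humem.2
    nlinarith
  have hΦ : HasDerivAt (fun g : ℝ => g - g^3/3) (1 - u^2) u := by
    have h1' := (hasDerivAt_id u).sub ((hasDerivAt_pow 3 u).div_const 3)
    refine h1'.congr_deriv ?_
    norm_num
  have hcomp := hΦ.comp t hG
  have heq : (fun s => schwarzG V s - (schwarzG V s)^3/3) =ᶠ[nhds t]
      (fun s => 2/3 - 4*s/(3*V)) := by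
    filter_upwards [Ioo_mem_nhds h0 h1] with s hs
    exact schwarzG_identity V s hV hs.1.le hs.2.le
  have h2 : HasDerivAt (fun s => 2/3 - 4*s/(3*V)) ((1-u^2) * D) t := by
    apply HasDerivAt.congr_of_eventuallyEq _ heq.symm
    have : (fun s => schwarzG V s - (schwarzG V s)^3/3) =
        (fun g : ℝ => g - g^3/3) ∘ (schwarzG V) := rfl
    rw [this]
    exact hcomp
  have h3 : HasDerivAt (fun s : ℝ => 2/3 - 4*s/(3*V)) (-(4/(3*V))) t := by
    simpa using (((hasDerivAt_id t).const_mul 4).div_const (3*V)).const_sub (2/3)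
  have hDval : (1-u^2) * D = -(4/(3*V)) := h2.unique h3
  have hfinal : D = -(4/(3*V)) / (1 - u^2) := by
    rw [eq_div_iff hu2]
    linear_combination hDval
  rw [← hfinal]
  exact hG

set_option maxHeartbeats 1000000 in
theorem schwarz_IIIa (x₀ x₁ : ℝ) (hx : x₀ < x₁) (Q Q' : ℝ → ℝ)
    (hderiv : ∀ x ∈ Set.Icc x₀ x₁, HasDerivAt Q (Q' x) x)
    (hcont : ContinuousOn Q' (Set.Icc x₀ x₁))
    (hQ0 : ∀ x ∈ Set.Icc x₀ x₁, 0 ≤ Q x)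
    (hend : Q x₀ = 0 ∧ Q x₁ = 0)
    (V : ℝ) (hV : V = ∫ x in x₀..x₁, Q x) (hVpos : 0 < V) :
    (∫ x in x₀..x₁, Real.sqrt (4 * Real.pi * Q x + (Q' x) ^ 2))
      ≥ (36 * Real.pi * V ^ 2) ^ ((1:ℝ)/3) := by
  obtain ⟨hQx₀, hQx₁⟩ := hend
  have hπ := Real.pi_pos
  set a : ℝ := (3*V/(4*Real.pi)) ^ ((1:ℝ)/3) with ha_def
  have ha : 0 < a := Real.rpow_pos_of_pos (by positivity) _
  have ha3 : a^3 = 3*V/(4*Real.pi) := by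
    rw [ha_def, ← Real.rpow_natCast ((3*V/(4*Real.pi)) ^ ((1:ℝ)/3)) 3,
      ← Real.rpow_mul (by positivity)]
    norm_num
  -- reduce goal to 3*V/a ≤ integral
  have hgoal_eq : (36 * Real.pi * V ^ 2) ^ ((1:ℝ)/3) = 3*V/a := by
    have h1 : ((3*V/a)^3 : ℝ) = 36 * Real.pi * V ^ 2 := by
      rw [div_pow, ha3]
      field_simp
      ring
    rw [← h1, ← Real.rpow_natCast (3*V/a) 3, ← Real.rpow_mul (by positivity)]
    norm_num
  rw [ge_iff_le, hgoal_eq]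
  -- basic continuity and integrability
  have hQc : ContinuousOn Q (Set.Icc x₀ x₁) := fun x hxm =>
    ((hderiv x hxm).continuousAt).continuousWithinAt
  have hQint : ∀ u v, u ∈ Set.Icc x₀ x₁ → v ∈ Set.Icc x₀ x₁ →
      IntervalIntegrable Q MeasureTheory.volume u v := by
    intro u v hu hv
    exact (hQc.mono (Set.uIcc_subset_Icc hu hv)).intervalIntegrable
  set m : ℝ → ℝ := fun x => ∫ t in x₀..x, Q t with hm_def
  have hx₀m : x₀ ∈ Set.Icc x₀ x₁ := Set.left_mem_Icc.2 hx.le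
  have hx₁m : x₁ ∈ Set.Icc x₀ x₁ := Set.right_mem_Icc.2 hx.le
  have hm_cont : ContinuousOn m (Set.Icc x₀ x₁) := by
    have h := intervalIntegral.continuousOn_primitive_interval
      (f := Q) (a := x₀) (b := x₁) (μ := MeasureTheory.volume) ?_
    · rwa [Set.uIcc_of_le hx.le] at h
    · rw [Set.uIcc_of_le hx.le]
      exact hQc.integrableOn_Icc
  have hm0 : m x₀ = 0 := intervalIntegral.integral_same
  have hmV : m x₁ = V := hV.symm
  have hm_nonneg : ∀ x ∈ Set.Icc x₀ x₁, 0 ≤ m x := by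
    intro x hxm
    apply intervalIntegral.integral_nonneg hxm.1
    intro u hu
    exact hQ0 u ⟨hu.1, hu.2.trans hxm.2⟩
  have hm_le : ∀ x ∈ Set.Icc x₀ x₁, m x ≤ V := by
    intro x hxm
    have hadd : m x + ∫ t in x..x₁, Q t = V := by
      rw [hmV.symm]
      exact intervalIntegral.integral_add_adjacent_intervals
        (hQint x₀ x hx₀m hxm) (hQint x x₁ hxm hx₁m)
    have h2 : 0 ≤ ∫ t in x..x₁, Q t := by
      apply intervalIntegral.integral_nonneg hxm.2
      intro u hu
      exact hQ0 u ⟨hxm.1.trans hu.1, hu.2⟩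
    linarith
  have hm_deriv : ∀ x ∈ Set.Ioo x₀ x₁, HasDerivAt m (Q x) x := by
    intro x hxm
    apply intervalIntegral.integral_hasDerivAt_right
      (hQint x₀ x hx₀m (Set.mem_Icc_of_Ioo hxm))
    · exact (hQc.mono Set.Ioo_subset_Icc_self).stronglyMeasurableAtFilter isOpen_Ioo x hxm
    · exact (hderiv x (Set.mem_Icc_of_Ioo hxm)).continuousAt
  set G : ℝ → ℝ := schwarzG V with hG_def
  set F : ℝ → ℝ := fun x => Q x * G (m x) + 3/a * m x with hF_def
  set g' : ℝ → ℝ := fun x =>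
    3*Q x/a + Q' x * G (m x) - (Q x)^2/((3*V/4) * (1 - (G (m x))^2)) with hg'_def
  -- case: degenerate points
  have hdeg : ∀ x ∈ Set.Ioo x₀ x₁, m x = 0 ∨ m x = V → Q x = 0 ∧ Q' x = 0 := by
    intro x hxm hcase
    have hQx : Q x = 0 := by
      rcases hcase with h | h
      · -- m has local min at x
        have hloc : IsLocalMin m x := by
          have : Set.Icc x₀ x₁ ∈ nhds x := Icc_mem_nhds hxm.1 hxm.2
          filter_upwards [this] with y hy
          rw [h]
          exact hm_nonneg y hy
        have := hloc.hasDerivAt_eq_zero (hm_deriv x hxm)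
        linarith
      · have hloc : IsLocalMax m x := by
          have : Set.Icc x₀ x₁ ∈ nhds x := Icc_mem_nhds hxm.1 hxm.2
          filter_upwards [this] with y hy
          rw [h]
          exact hm_le y hy
        have := hloc.hasDerivAt_eq_zero (hm_deriv x hxm)
        linarith
    refine ⟨hQx, ?_⟩
    have hloc : IsLocalMin Q x := by
      have : Set.Icc x₀ x₁ ∈ nhds x := Icc_mem_nhds hxm.1 hxm.2
      filter_upwards [this] with y hy
      rw [hQx]
      exact hQ0 y hy
    exact hloc.hasDerivAt_eq_zero (hderiv x (Set.mem_Icc_of_Ioo hxm))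
  -- derivative of F
  have key : ∀ x ∈ Set.Ioo x₀ x₁, HasDerivAt F (g' x) x := by
    intro x hxm
    by_cases hnd : m x ∈ Set.Ioo (0:ℝ) V
    · -- nondegenerate
      have hGd := schwarzG_hasDerivAt V (m x) hVpos hnd.1 hnd.2
      have hmd := hm_deriv x hxm
      have hcompG : HasDerivAt (fun y => G (m y))
          ((-(4/(3*V)) / (1 - (G (m x))^2)) * Q x) x := hGd.comp x hmd
      have hQd := hderiv x (Set.mem_Icc_of_Ioo hxm)
      have hprod := hQd.mul hcompG
      have hsum := hprod.add (hmd.const_mul (3/a))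
      have hmem := schwarzG_mem V (m x) hVpos hnd.1 hnd.2
      have hne : (1:ℝ) - (G (m x))^2 ≠ 0 := by
        have h1 := hmem.1
        have h2 := hmem.2
        rw [hG_def]
        nlinarith
      refine hsum.congr_deriv ?_
      rw [hg'_def]
      have hVne : V ≠ 0 := ne_of_gt hVpos
      field_simp
      ring
    · -- degenerate
      obtain ⟨hQx, hQ'x⟩ := hdeg x hxm (by
        rcases (Set.mem_Icc.1 ⟨hm_nonneg x (Set.mem_Icc_of_Ioo hxm),
          hm_le x (Set.mem_Icc_of_Ioo hxm)⟩ : m x ∈ Set.Icc 0 V) with ⟨h1, h2⟩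
        simp only [Set.mem_Ioo, not_and_or, not_lt] at hnd
        rcases hnd with h | h
        · left; linarith
        · right; linarith)
      have hg'x : g' x = 0 := by
        rw [hg'_def]
        simp [hQx, hQ'x]
      rw [hg'x]
      -- F has derivative 0 at x
      have hQd : HasDerivAt Q 0 x := by
        have := hderiv x (Set.mem_Icc_of_Ioo hxm)
        rwa [hQ'x] at this
      have hW : HasDerivAt (fun y => Q y * G (m y)) 0 x := by
        rw [hasDerivAt_iff_isLittleO]
        have hQlo : (fun y => Q y - Q x - (y - x) * 0) =o[nhds x] fun y => y - x := by
          have := hasDerivAt_iff_isLittleO.1 hQd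
          simpa using this
        have hbig : (fun y => Q y * G (m y) - Q x * G (m x) - (y - x) * 0)
            =O[nhds x] fun y => Q y - Q x - (y - x) * 0 := by
          apply Asymptotics.isBigO_of_le' (c := 2)
          intro y
          simp only [Real.norm_eq_abs, hQx, zero_mul, sub_zero, mul_zero]
          rw [abs_mul]
          calc |Q y| * |G (m y)| ≤ |Q y| * 2 := by
                apply mul_le_mul_of_nonneg_left _ (abs_nonneg _)
                rw [hG_def]
                exact abs_schwarzG_le V (m y)
            _ = 2 * |Q y| := by ring
        exact hbig.trans_isLittleO hQlo
      have hmQ : HasDerivAt (fun y => 3/a * m y) (3/a * Q x) x := (hm_deriv x hxm).const_mul (3/a)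
      have := hW.add hmQ
      rw [hQx] at this
      simp at this
      exact this
  -- pointwise bound
  have bound : ∀ x ∈ Set.Ioo x₀ x₁, g' x ≤ Real.sqrt (4 * Real.pi * Q x + (Q' x) ^ 2) := by
    intro x hxm
    by_cases hnd : m x ∈ Set.Ioo (0:ℝ) V
    · have hmem := schwarzG_mem V (m x) hVpos hnd.1 hnd.2
      set u : ℝ := G (m x) with hu_def
      have hu1 : -1 < u := hmem.1
      have hu2 : u < 1 := hmem.2
      have h1u : (0:ℝ) < 1 - u^2 := by nlinarith
      have hq : 0 ≤ Q x := hQ0 x (Set.mem_Icc_of_Ioo hxm)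
      set A : ℝ := Real.sqrt (Real.pi * Q x * (1 - u^2)) with hA_def
      set B : ℝ := (Q x)^2 / ((3*V/4) * (1 - u^2)) with hB_def
      have hA : 0 ≤ A := Real.sqrt_nonneg _
      have hB : 0 ≤ B := by positivity
      have hA2 : A^2 = Real.pi * Q x * (1 - u^2) := Real.sq_sqrt (by positivity)
      -- AM-GM: 3 * Q x / a ≤ 2*A + B
      have hAB : A^2 * B = (Q x)^3 / a^3 := by
        rw [hA2, hB_def, ha3]
        have : (1:ℝ) - u^2 ≠ 0 := ne_of_gt h1u
        field_simp
      have hamgm : 3 * Q x / a ≤ 2*A + B := by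
        rcases eq_or_lt_of_le hq with h | h
        · have hQ0' : Q x = 0 := h.symm
          have hB0 : B = 0 := by rw [hB_def, hQ0']; simp
          have hA0 : A = 0 := by rw [hA_def, hQ0']; simp
          rw [hQ0', hA0, hB0]; simp
        · have hApos : 0 < A := by
            rw [hA_def]
            apply Real.sqrt_pos.2
            positivity
          have hr : (0:ℝ) < Q x / a := by positivity
          have hfact : A^2 * (2*A + B - 3 * (Q x / a)) =
              (A - Q x/a)^2 * (2*A + Q x/a) := by
            have h : A^2 * B = (Q x/a)^3 := by rw [hAB]; ring
            linear_combination h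
          have hpos : 0 ≤ (A - Q x/a)^2 * (2*A + Q x/a) := by positivity
          have h2 : 0 ≤ 2*A + B - 3 * (Q x / a) := by
            by_contra hneg
            push_neg at hneg
            have : A^2 * (2*A + B - 3 * (Q x / a)) < 0 := by
              apply mul_neg_of_pos_of_neg (by positivity) (by linarith)
            linarith [hfact ▸ this]
          have : 3 * Q x / a = 3 * (Q x / a) := by ring
          linarith [this ▸ h2]
      -- Cauchy-Schwarz: 2*A + Q' x * u ≤ sqrt (4π Q + Q'^2)
      have hcs : 2*A + Q' x * u ≤ Real.sqrt (4 * Real.pi * Q x + (Q' x) ^ 2) := by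
        set P : ℝ := Real.sqrt (4 * Real.pi * Q x) with hP_def
        set s : ℝ := Real.sqrt (1 - u^2) with hs_def
        have hP2 : P^2 = 4 * Real.pi * Q x := Real.sq_sqrt (by positivity)
        have hs2 : s^2 = 1 - u^2 := Real.sq_sqrt h1u.le
        have h2A : 2*A = P * s := by
          rw [hA_def, hP_def, hs_def, ← Real.sqrt_mul (by positivity), show (2:ℝ) = Real.sqrt 4 by
            rw [show (4:ℝ) = 2^2 by norm_num, Real.sqrt_sq (by norm_num)]]
          rw [← Real.sqrt_mul (by norm_num)]
          congr 1
          ring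
        rw [h2A]
        have hsq : (P * s + Q' x * u)^2 ≤ 4 * Real.pi * Q x + (Q' x) ^ 2 := by
          nlinarith [sq_nonneg (P * u - Q' x * s), hP2, hs2]
        calc P * s + Q' x * u ≤ |P * s + Q' x * u| := le_abs_self _
          _ = Real.sqrt ((P * s + Q' x * u)^2) := (Real.sqrt_sq_eq_abs _).symm
          _ ≤ Real.sqrt (4 * Real.pi * Q x + (Q' x) ^ 2) := Real.sqrt_le_sqrt hsq
      -- combine
      have : g' x = 3*Q x/a + Q' x * u - B := rfl
      rw [this]
      have h3 : (3:ℝ)*Q x/a = 3 * Q x / a := by ring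
      linarith [hamgm, hcs]
    · obtain ⟨hQx, hQ'x⟩ := hdeg x hxm (by
        rcases (Set.mem_Icc.1 ⟨hm_nonneg x (Set.mem_Icc_of_Ioo hxm),
          hm_le x (Set.mem_Icc_of_Ioo hxm)⟩ : m x ∈ Set.Icc 0 V) with ⟨h1, h2⟩
        simp only [Set.mem_Ioo, not_and_or, not_lt] at hnd
        rcases hnd with h | h
        · left; linarith
        · right; linarith)
      have hg'x : g' x = 0 := by
        rw [hg'_def]
        simp [hQx, hQ'x]
      rw [hg'x]
      exact Real.sqrt_nonneg _
  -- continuity of F on Icc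
  have hFc : ContinuousOn F (Set.Icc x₀ x₁) := by
    apply ContinuousOn.add
    · exact hQc.mul (((schwarzG_continuous V).comp_continuousOn hm_cont))
    · exact (hm_cont.const_smul (3/a)).congr (fun y hy => by simp [smul_eq_mul])
  -- integrability of the sqrt integrand
  have hint : MeasureTheory.IntegrableOn
      (fun x => Real.sqrt (4 * Real.pi * Q x + (Q' x) ^ 2)) (Set.Icc x₀ x₁) := by
    apply ContinuousOn.integrableOn_Icc
    apply ContinuousOn.sqrt
    exact ((continuousOn_const.mul hQc).add (hcont.pow 2))
  have main := intervalIntegral.sub_le_integral_of_hasDeriv_right_of_le hx.le hFc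
    (fun x hxm => (key x hxm).hasDerivWithinAt) hint bound
  have hFx₁ : F x₁ = 3*V/a := by
    rw [hF_def]
    simp only [hmV, hQx₁, zero_mul, zero_add]
    ring
  have hFx₀ : F x₀ = 0 := by
    rw [hF_def]
    simp only [hm0, hQx₀, zero_mul, mul_zero, add_zero]
  rw [hFx₁, hFx₀, sub_zero] at main
  exact main
end
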